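/- For the logarithmic random-value function with parameter λ, if λ > 1/r_min (with r_min > 0), then for every N ≥ 2 the expected difference between the highest and second-highest of N i.i.d. draws is strictly less than r_min. -/

import Mathlib

open MeasureTheory ProbabilityTheory
open scoped ENNReal

/-- The maximum of finitely many real values. -/
noncomputable def maxOf {N : ℕ} (v : Fin N → ℝ) : ℝ := ⨆ i, v i

/-- The second-largest of finitely many real values. -/
noncomputable def secondMaxOf {N : ℕ} (v : Fin N → ℝ) : ℝ :=
  ⨅ i, ⨆ j : {j : Fin N // j ≠ i}, v j.1

/-- The distribution of the logarithmic random-value function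
`RV_log = r_min - (1/λ) ln(1 - U)` with `U` uniform on `[0,1)`. -/
noncomputable def logRVDist (rmin lam : ℝ) : Measure ℝ :=
  (volume.restrict (Set.Ico (0 : ℝ) 1)).map (fun u => rmin - (1 / lam) * Real.log (1 - u))

/-! ### Auxiliary lemmas -/

lemma logRV_measurable (rmin lam : ℝ) :
    Measurable (fun u : ℝ => rmin - (1 / lam) * Real.log (1 - u)) :=
  measurable_const.sub
    (measurable_const.mul (Real.measurable_log.comp (measurable_const.sub measurable_id)))

/-- Tail probability of the shifted exponential distribution. -/
lemma logRVDist_Ioi (rmin lam : ℝ) (hlam : 0 < lam) {z : ℝ} (hz : rmin ≤ z) :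
    logRVDist rmin lam (Set.Ioi z) = ENNReal.ofReal (Real.exp (-(lam * (z - rmin)))) := by
  rw [logRVDist, Measure.map_apply (logRV_measurable rmin lam) measurableSet_Ioi,
    Measure.restrict_apply (logRV_measurable rmin lam measurableSet_Ioi)]
  have hinv : 1 / lam * lam = 1 := by field_simp
  have hset : (fun u : ℝ => rmin - (1 / lam) * Real.log (1 - u)) ⁻¹' Set.Ioi z ∩ Set.Ico 0 1
      = Set.Ioo (1 - Real.exp (-(lam * (z - rmin)))) 1 := by
    ext u
    simp only [Set.mem_inter_iff, Set.mem_preimage, Set.mem_Ioi, Set.mem_Ico, Set.mem_Ioo]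
    constructor
    · rintro ⟨h1, h2, h3⟩
      refine ⟨?_, h3⟩
      have h1u : 0 < 1 - u := by linarith
      have h6 : lam * (1 / lam * Real.log (1 - u)) = Real.log (1 - u) := by
        field_simp
      have hlog : Real.log (1 - u) < -(lam * (z - rmin)) := by
        have h4 : 1 / lam * Real.log (1 - u) < rmin - z := by linarith
        have h5 := mul_lt_mul_of_pos_left h4 hlam
        nlinarith [h5, h6]
      have := (Real.log_lt_iff_lt_exp h1u).mp hlog
      linarith
    · rintro ⟨h1, h2⟩
      have hexp : Real.exp (-(lam * (z - rmin))) ≤ 1 := by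
        rw [Real.exp_le_one_iff]
        nlinarith
      have h0u : 0 ≤ u := by linarith
      refine ⟨?_, h0u, h2⟩
      have h1u : 0 < 1 - u := by linarith
      have hlog : Real.log (1 - u) < -(lam * (z - rmin)) :=
        (Real.log_lt_iff_lt_exp h1u).mpr (by linarith)
      have h6 : lam * (1 / lam * Real.log (1 - u)) = Real.log (1 - u) := by
        field_simp
      have h5 := mul_lt_mul_of_pos_left hlog (one_div_pos.mpr hlam)
      nlinarith [h5, h6]
  rw [hset, Real.volume_Ioo]
  congr 1
  ring

/-- The shifted exponential distribution gives no mass below `rmin`. -/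
lemma logRVDist_Iio (rmin lam : ℝ) (hlam : 0 < lam) :
    logRVDist rmin lam (Set.Iio rmin) = 0 := by
  rw [logRVDist, Measure.map_apply (logRV_measurable rmin lam) measurableSet_Iio,
    Measure.restrict_apply (logRV_measurable rmin lam measurableSet_Iio)]
  have hset : (fun u : ℝ => rmin - (1 / lam) * Real.log (1 - u)) ⁻¹' Set.Iio rmin ∩ Set.Ico 0 1
      = (∅ : Set ℝ) := by
    rw [Set.eq_empty_iff_forall_notMem]
    rintro u ⟨h1, h2, h3⟩
    simp only [Set.mem_preimage, Set.mem_Iio] at h1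
    have hlog : Real.log (1 - u) ≤ 0 := Real.log_nonpos (by linarith) (by linarith)
    nlinarith [mul_nonpos_of_nonneg_of_nonpos (le_of_lt (one_div_pos.mpr hlam)) hlog]
  rw [hset, measure_empty]

lemma lintegral_exp_tail (lam : ℝ) (hlam : 0 < lam) :
    ∫⁻ t in Set.Ioi (0 : ℝ), ENNReal.ofReal (Real.exp (-(lam * t)))
      = ENNReal.ofReal (1 / lam) := by
  have hint : MeasureTheory.IntegrableOn (fun t : ℝ => Real.exp (-(lam * t))) (Set.Ioi 0) := by
    simpa [neg_mul] using exp_neg_integrableOn_Ioi 0 hlam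
  rw [← ofReal_integral_eq_lintegral_ofReal hint (ae_of_all _ fun t => (Real.exp_pos _).le)]
  congr 1
  have h := integral_comp_mul_left_Ioi (fun x => Real.exp (-x)) 0 hlam
  simp only [mul_zero, smul_eq_mul] at h
  rw [h, integral_exp_neg_Ioi_zero, mul_one, one_div]

/-- Key computation: the expected positive part of the overshoot above a level `y ≥ rmin`. -/
lemma lintegral_max_logRVDist (rmin lam : ℝ) (hlam : 0 < lam) {y : ℝ} (hy : rmin ≤ y) :
    ∫⁻ x, ENNReal.ofReal (max (x - y) 0) ∂(logRVDist rmin lam)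
      = ENNReal.ofReal (1 / lam) * logRVDist rmin lam (Set.Ioi y) := by
  have hmble : Measurable fun x : ℝ => max (x - y) 0 :=
    (measurable_id.sub measurable_const).max measurable_const
  rw [lintegral_eq_lintegral_meas_lt (f := fun x => max (x - y) 0) (logRVDist rmin lam)
    (ae_of_all _ fun x => le_max_right _ _) hmble.aemeasurable]
  have hcong : ∀ t ∈ Set.Ioi (0 : ℝ),
      logRVDist rmin lam {x | t < max (x - y) 0}
        = ENNReal.ofReal (Real.exp (-(lam * (y - rmin)))) * ENNReal.ofReal (Real.exp (-(lam * t)))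
      := by
    intro t ht
    have ht0 : 0 < t := ht
    have hseteq : {x : ℝ | t < max (x - y) 0} = Set.Ioi (y + t) := by
      ext x
      simp only [Set.mem_setOf_eq, Set.mem_Ioi, lt_max_iff]
      constructor
      · rintro (h | h) <;> linarith
      · intro h; left; linarith
    rw [hseteq, logRVDist_Ioi rmin lam hlam (by linarith), ← ENNReal.ofReal_mul
      (Real.exp_pos _).le, ← Real.exp_add]
    congr 2
    ring
  have hfm : Measurable fun t : ℝ => ENNReal.ofReal (Real.exp (-(lam * t))) := by fun_prop
  rw [setLIntegral_congr_fun measurableSet_Ioi hcong,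
    lintegral_const_mul _ hfm,
    lintegral_exp_tail lam hlam, logRVDist_Ioi rmin lam hlam hy, mul_comm]

/-- The gap between the maximum and the second maximum equals the sum over `i` of the
positive part of `v i` minus the maximum of the other values. -/
lemma gap_eq_sum {N : ℕ} (hN : 2 ≤ N) (v : Fin N → ℝ) :
    maxOf v - secondMaxOf v
      = ∑ i, max (v i - ⨆ j : {j : Fin N // j ≠ i}, v j.1) 0 := by
  haveI : Nonempty (Fin N) := ⟨⟨0, by omega⟩⟩
  haveI hnt : Nontrivial (Fin N) := Fin.nontrivial_iff_two_le.mpr hN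
  haveI hne : ∀ i : Fin N, Nonempty {j : Fin N // j ≠ i} := fun i => by
    obtain ⟨j, hj⟩ := exists_ne i
    exact ⟨⟨j, hj⟩⟩
  obtain ⟨i₀, hi₀⟩ := Finite.exists_max v
  unfold maxOf secondMaxOf
  set M : Fin N → ℝ := fun i => ⨆ j : {j : Fin N // j ≠ i}, v j.1 with hM
  have hMle : ∀ i, M i ≤ v i₀ := fun i => ciSup_le fun j => hi₀ j.1
  have hMeq : ∀ i, i ≠ i₀ → M i = v i₀ := by
    intro i hi
    refine le_antisymm (hMle i) ?_
    exact le_ciSup (f := fun j : {j : Fin N // j ≠ i} => v j.1)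
      (Set.Finite.bddAbove (Set.finite_range _)) ⟨i₀, hi.symm⟩
  have hmax : (⨆ i, v i) = v i₀ :=
    le_antisymm (ciSup_le hi₀) (le_ciSup (f := v) (Set.Finite.bddAbove (Set.finite_range v)) i₀)
  have hsecond : (⨅ i, M i) = M i₀ := by
    refine le_antisymm (ciInf_le (Set.Finite.bddBelow (Set.finite_range _)) i₀)
      (le_ciInf fun i => ?_)
    show M i₀ ≤ M i
    rcases eq_or_ne i i₀ with rfl | hi
    · exact le_rfl
    · rw [hMeq i hi]; exact hMle i₀
  have hsum : ∑ i, max (v i - M i) 0 = max (v i₀ - M i₀) 0 := by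
    refine Finset.sum_eq_single i₀ (fun i _ hi => ?_)
      (fun h => absurd (Finset.mem_univ i₀) h)
    rw [max_eq_right]
    rw [hMeq i hi]
    have := hi₀ i
    linarith
  rw [hmax, hsecond, hsum, max_eq_left (sub_nonneg.mpr (hMle i₀))]

/-- For the logarithmic random-value function with parameter `λ`, if `λ > 1/r_min`
(with `r_min > 0`), then for every `N ≥ 2` the expected difference between the highest
and second-highest of `N` i.i.d. draws is strictly less than `r_min`
(Skipping Resistance). -/
theorem log_value_function_skipping_resistance
    {Ω : Type*} [MeasurableSpace Ω] (μ : Measure Ω) [IsProbabilityMeasure μ]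
    (rmin lam : ℝ) (hrmin : 0 < rmin) (hlam : 1 / rmin < lam)
    (N : ℕ) (hN : 2 ≤ N)
    (X : Fin N → Ω → ℝ) (hmeas : ∀ i, Measurable (X i))
    (hindep : iIndepFun X μ)
    (hdist : ∀ i, μ.map (X i) = logRVDist rmin lam) :
    ∫ ω, (maxOf (fun i => X i ω) - secondMaxOf (fun i => X i ω)) ∂μ < rmin := by
  classical
  have hrinv : (0 : ℝ) < 1 / rmin := by positivity
  have hlam0 : (0 : ℝ) < lam := lt_trans hrinv hlam
  have hlaminv : 1 / lam < rmin := by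
    have := one_div_lt_one_div_of_lt hrinv hlam
    rwa [one_div_one_div] at this
  by_cases hInt : Integrable (fun ω => maxOf (fun i => X i ω) - secondMaxOf (fun i => X i ω)) μ
  swap
  · rw [integral_undef hInt]; exact hrmin
  haveI : Nonempty (Fin N) := ⟨⟨0, by omega⟩⟩
  haveI hnt : Nontrivial (Fin N) := Fin.nontrivial_iff_two_le.mpr hN
  haveI hne : ∀ i : Fin N, Nonempty {j : Fin N // j ≠ i} := fun i => by
    obtain ⟨j, hj⟩ := exists_ne i
    exact ⟨⟨j, hj⟩⟩
  set M : Fin N → Ω → ℝ := fun i ω => ⨆ j : {j : Fin N // j ≠ i}, X j.1 ω with hMdef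
  have hMmeas : ∀ i, Measurable (M i) := fun i => Measurable.iSup fun j => hmeas j.1
  set T : Fin N → Ω → ℝ := fun i ω => max (X i ω - M i ω) 0 with hTdef
  have hTmeas : ∀ i, Measurable (T i) := fun i =>
    ((hmeas i).sub (hMmeas i)).max measurable_const
  have hgap : ∀ ω, maxOf (fun i => X i ω) - secondMaxOf (fun i => X i ω) = ∑ i, T i ω :=
    fun ω => gap_eq_sum hN _
  set A : Fin N → Set Ω := fun i => {ω | M i ω < X i ω} with hAdef
  have hAmeas : ∀ i, MeasurableSet (A i) := fun i => measurableSet_lt (hMmeas i) (hmeas i)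
  have hAdisj : ∀ i j : Fin N, i ≠ j → Disjoint (A i) (A j) := by
    intro i j hij
    rw [Set.disjoint_left]
    intro ω hi hj
    have h1 : X j ω ≤ M i ω :=
      le_ciSup (f := fun k : {k : Fin N // k ≠ i} => X k.1 ω)
        (Set.Finite.bddAbove (Set.finite_range _)) ⟨j, hij.symm⟩
    have h2 : X i ω ≤ M j ω :=
      le_ciSup (f := fun k : {k : Fin N // k ≠ j} => X k.1 ω)
        (Set.Finite.bddAbove (Set.finite_range _)) ⟨i, hij⟩
    have hi' : M i ω < X i ω := hi
    have hj' : M j ω < X j ω := hj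
    linarith
  have hsumA : ∑ i, μ (A i) ≤ 1 := by
    rw [← measure_biUnion_finset (fun i _ j _ hij => hAdisj i j hij) (fun i _ => hAmeas i)]
    exact prob_le_one
  -- the key per-index identity
  have hkey : ∀ i, ∫ ω, T i ω ∂μ = (1 / lam) * (μ (A i)).toReal := by
    intro i
    haveI : IsProbabilityMeasure (μ.map (M i)) :=
      Measure.isProbabilityMeasure_map (hMmeas i).aemeasurable
    haveI : IsProbabilityMeasure (μ.map (X i)) :=
      Measure.isProbabilityMeasure_map (hmeas i).aemeasurable
    -- independence of `M i` and `X i`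
    have hpair : IndepFun (M i) (X i) μ := by
      have h := hindep.indepFun_finset ({i}ᶜ) {i} disjoint_compl_left hmeas
      have hφ : Measurable (fun v : (({i}ᶜ : Finset (Fin N)) → ℝ) =>
          ⨆ j : {j : Fin N // j ≠ i}, v ⟨j.1, Finset.mem_compl.mpr (by simp [j.2])⟩) :=
        Measurable.iSup fun j => measurable_pi_apply _
      have hψ : Measurable (fun v : (({i} : Finset (Fin N)) → ℝ) =>
          v ⟨i, Finset.mem_singleton_self i⟩) := measurable_pi_apply _
      exact h.comp hφ hψ
    have hmap : μ.map (fun ω => (M i ω, X i ω)) = (μ.map (M i)).prod (μ.map (X i)) :=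
      (indepFun_iff_map_prod_eq_prod_map_map (hMmeas i).aemeasurable
        (hmeas i).aemeasurable).mp hpair
    -- `M i ≥ rmin` almost everywhere
    have hXae : ∀ j, ∀ᵐ ω ∂μ, rmin ≤ X j ω := by
      intro j
      have h0 : μ (X j ⁻¹' Set.Iio rmin) = 0 := by
        rw [← Measure.map_apply (hmeas j) measurableSet_Iio, hdist j,
          logRVDist_Iio rmin lam hlam0]
      rw [ae_iff]
      convert h0 using 2
      ext ω
      simp [not_le]
    obtain ⟨j₀, hj₀⟩ := exists_ne i
    have hMae : ∀ᵐ ω ∂μ, rmin ≤ M i ω := by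
      filter_upwards [hXae j₀] with ω hω
      exact le_trans hω
        (le_ciSup (f := fun j : {j : Fin N // j ≠ i} => X j.1 ω)
          (Set.Finite.bddAbove (Set.finite_range _)) ⟨j₀, hj₀⟩)
    have hρae : ∀ᵐ y ∂(μ.map (M i)), rmin ≤ y := by
      rw [ae_map_iff (hMmeas i).aemeasurable (by exact measurableSet_Ici)]
      exact hMae
    -- turn the Bochner integral into a Lebesgue integral
    have hTnn : 0 ≤ᵐ[μ] T i := ae_of_all _ fun ω => le_max_right _ _
    rw [integral_eq_lintegral_of_nonneg_ae hTnn (hTmeas i).aestronglyMeasurable]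
    have hF : Measurable (fun p : ℝ × ℝ => ENNReal.ofReal (max (p.2 - p.1) 0)) :=
      ENNReal.measurable_ofReal.comp ((measurable_snd.sub measurable_fst).max measurable_const)
    have hl : ∫⁻ ω, ENNReal.ofReal (T i ω) ∂μ
        = ∫⁻ p, ENNReal.ofReal (max (p.2 - p.1) 0) ∂((μ.map (M i)).prod (μ.map (X i))) := by
      rw [← hmap, lintegral_map hF ((hMmeas i).prodMk (hmeas i))]
    rw [hl, lintegral_prod _ hF.aemeasurable]
    have hinner : ∀ᵐ y ∂(μ.map (M i)),
        (∫⁻ x, ENNReal.ofReal (max (x - y) 0) ∂(μ.map (X i)))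
          = ENNReal.ofReal (1 / lam) * (μ.map (X i)) (Set.Ioi y) := by
      filter_upwards [hρae] with y hy
      rw [hdist i]
      exact lintegral_max_logRVDist rmin lam hlam0 hy
    have hmt : Measurable (fun y : ℝ => (μ.map (X i)) (Set.Ioi y)) := by
      have hs : MeasurableSet {p : ℝ × ℝ | p.1 < p.2} :=
        measurableSet_lt measurable_fst measurable_snd
      exact measurable_measure_prodMk_left hs
    rw [lintegral_congr_ae hinner, lintegral_const_mul _ hmt]
    have htail : (∫⁻ y, (μ.map (X i)) (Set.Ioi y) ∂(μ.map (M i))) = μ (A i) := by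
      have hs : MeasurableSet {p : ℝ × ℝ | p.1 < p.2} :=
        measurableSet_lt measurable_fst measurable_snd
      have h1 : (∫⁻ y, (μ.map (X i)) (Set.Ioi y) ∂(μ.map (M i)))
          = ((μ.map (M i)).prod (μ.map (X i))) {p : ℝ × ℝ | p.1 < p.2} :=
        (Measure.prod_apply hs).symm
      rw [h1, ← hmap, Measure.map_apply ((hMmeas i).prodMk (hmeas i)) hs]
      rfl
    rw [htail, ENNReal.toReal_mul, ENNReal.toReal_ofReal (by positivity)]
  -- integrability of each term
  have hTint : ∀ i, Integrable (T i) μ := by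
    intro i
    refine hInt.mono' (hTmeas i).aestronglyMeasurable (ae_of_all _ fun ω => ?_)
    rw [Real.norm_eq_abs, abs_of_nonneg (le_max_right _ _ : (0:ℝ) ≤ T i ω), hgap ω]
    exact Finset.single_le_sum (f := fun j => T j ω) (fun j _ => le_max_right _ _)
      (Finset.mem_univ i)
  -- put everything together
  have hsum : ∑ i, (μ (A i)).toReal ≤ 1 := by
    rw [← ENNReal.toReal_sum (fun i _ => measure_ne_top μ (A i))]
    calc (∑ i, μ (A i)).toReal ≤ (1 : ℝ≥0∞).toReal :=
          ENNReal.toReal_mono ENNReal.one_ne_top hsumA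
      _ = 1 := ENNReal.toReal_one
  calc ∫ ω, (maxOf (fun i => X i ω) - secondMaxOf (fun i => X i ω)) ∂μ
      = ∑ i, ∫ ω, T i ω ∂μ := by
        rw [← integral_finset_sum _ (fun i _ => hTint i)]
        exact integral_congr_ae (ae_of_all _ fun ω => hgap ω)
    _ = (1 / lam) * ∑ i, (μ (A i)).toReal := by
        rw [Finset.mul_sum]
        exact Finset.sum_congr rfl fun i _ => hkey i
    _ ≤ (1 / lam) * 1 :=
        mul_le_mul_of_nonneg_left hsum (by positivity)
    _ < rmin := by rw [mul_one]; exact hlaminv
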